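/- arXiv:1104.1097 — 2 statements merged into one kernel-verified Lean document; each statement's English description precedes it below -/
import Mathlib

section
/- Let p and q be distinct odd primes and n = pq. Then the graph ICG_n({1, p}) has diameter 2, two vertices a, b are at distance 2 if and only if gcd(a − b, n) = q, and the spectrum of its distance matrix consists of the eigenvalue −2 with multiplicity pq − q, the eigenvalue p − 2 with multiplicity q − 1, and the eigenvalue pq + p − 2 with multiplicity 1. -/
set_option linter.unusedSectionVars false
set_option linter.unusedVariables false
set_option maxHeartbeats 1600000
set_option synthInstance.maxHeartbeats 400000

open scoped Classical

/-- The integral circulant graph `ICG_n(D)`: vertices `0,…,n-1` (as `ZMod n`), with `a ~ b` iff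
`gcd(a-b, n) ∈ D`. -/
def ICG (n : ℕ) (D : Finset ℕ) : SimpleGraph (ZMod n) where
  Adj a b := a ≠ b ∧ Int.gcd ((a.val : ℤ) - (b.val : ℤ)) n ∈ D
  symm := ⟨by
    rintro a b ⟨hne, h⟩
    refine ⟨hne.symm, ?_⟩
    rwa [show ((b.val : ℤ) - a.val) = -((a.val : ℤ) - b.val) by ring, Int.neg_gcd]⟩
  loopless := ⟨by rintro a ⟨h, -⟩; exact h rfl⟩

/-- The distance matrix of a graph. -/
noncomputable def distMatrix {V : Type} [Fintype V] (G : SimpleGraph V) : Matrix V V ℝ :=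
  Matrix.of fun i j => (G.dist i j : ℝ)

/-- The distance energy: the sum of the absolute values of the eigenvalues (with multiplicity)
of the distance matrix, i.e. of the roots of its characteristic polynomial. -/
noncomputable def distEnergy {V : Type} [Fintype V] [DecidableEq V] (G : SimpleGraph V) : ℝ :=
  ((distMatrix G).charpoly.roots.map fun x => |x|).sum

namespace ICGAux

open Matrix Polynomial

lemma gcd_congr_mod {n : ℕ} [NeZero n] (x y : ℤ) (h : (x : ZMod n) = (y : ZMod n)) :
    Int.gcd x n = Int.gcd y n := by
  have hd : (n : ℤ) ∣ x - y := by
    rwa [← ZMod.intCast_zmod_eq_zero_iff_dvd, Int.cast_sub, sub_eq_zero]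
  have key : ∀ u v : ℤ, (n:ℤ) ∣ u - v → (Int.gcd u n : ℤ) ∣ (Int.gcd v n : ℤ) := by
    intro u v huv
    refine Int.dvd_coe_gcd ?_ (Int.gcd_dvd_right _ _)
    have h1 : (Int.gcd u n : ℤ) ∣ u - v := dvd_trans (Int.gcd_dvd_right _ _) huv
    have := Int.dvd_sub (Int.gcd_dvd_left _ _) h1
    simpa using this
  have h1 := key x y hd
  have h2 := key y x (by simpa using hd.neg_right)
  exact Nat.dvd_antisymm (Int.natCast_dvd_natCast.mp h1) (Int.natCast_dvd_natCast.mp h2)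

lemma cast_val_sub {n : ℕ} [NeZero n] (a b : ZMod n) :
    (((a.val : ℤ) - b.val : ℤ) : ZMod n) = a - b := by
  push_cast
  rw [ZMod.natCast_val, ZMod.natCast_val, ZMod.cast_id, ZMod.cast_id]

lemma eq_iff_sub_val {n : ℕ} [NeZero n] (a b : ZMod n) : a = b ↔ (a.val : ℤ) - b.val = 0 := by
  rw [sub_eq_zero, Int.natCast_inj]
  exact ⟨fun h => h ▸ rfl, fun h => ZMod.val_injective n h⟩

lemma dvd_pq_cases {p q : ℕ} (hp : p.Prime) (hq : q.Prime) (hpq : p ≠ q) {g : ℕ}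
    (h : g ∣ p * q) : g = 1 ∨ g = p ∨ g = q ∨ g = p * q := by
  have hco : Nat.Coprime p q := (Nat.coprime_primes hp hq).mpr hpq
  by_cases hpg : p ∣ g <;> by_cases hqg : q ∣ g
  · exact Or.inr <| Or.inr <| Or.inr <|
      Nat.dvd_antisymm h (hco.mul_dvd_of_dvd_of_dvd hpg hqg)
  · have hcgq : Nat.Coprime g q := ((hq.coprime_iff_not_dvd).mpr hqg).symm
    exact Or.inr <| Or.inl <| Nat.dvd_antisymm (hcgq.dvd_of_dvd_mul_right h) hpg
  · have hcgp : Nat.Coprime g p := ((hp.coprime_iff_not_dvd).mpr hpg).symm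
    exact Or.inr <| Or.inr <| Or.inl <| Nat.dvd_antisymm (hcgp.dvd_of_dvd_mul_left h) hqg
  · have hcgp : Nat.Coprime g p := ((hp.coprime_iff_not_dvd).mpr hpg).symm
    have hcgq : Nat.Coprime g q := ((hq.coprime_iff_not_dvd).mpr hqg).symm
    exact Or.inl <| (hcgp.mul_right hcgq).eq_one_of_dvd h

lemma three_le_of_odd_prime {p : ℕ} (hp : p.Prime) (hpodd : Odd p) : 3 ≤ p := by
  rcases hp.eq_two_or_odd' with h | -
  · exact absurd (h ▸ hpodd) (by decide)
  · have := hp.two_le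
    rcases Nat.lt_or_ge p 3 with h3 | h3
    · interval_cases p
      · exact absurd hpodd (by decide)
    · exact h3

lemma gcd_classify {p q : ℕ} (hp : p.Prime) (hq : q.Prime) (hpq : p ≠ q)
    [NeZero (p * q)] {a b : ZMod (p * q)} (hab : a ≠ b) :
    (Int.gcd ((a.val : ℤ) - b.val) ((p * q : ℕ) : ℤ) = q ↔ (q : ℤ) ∣ ((a.val : ℤ) - b.val)) ∧
    Int.gcd ((a.val : ℤ) - b.val) ((p * q : ℕ) : ℤ) ≠ p * q := by
  set d : ℤ := (a.val : ℤ) - b.val with hd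
  have hdn : Int.gcd d ((p * q : ℕ) : ℤ) ∣ p * q := by
    exact_mod_cast ((Int.gcd_dvd_right _ _) : (Int.gcd d ((p * q : ℕ) : ℤ) : ℤ) ∣ ((p * q : ℕ) : ℤ))
  have hd0 : d ≠ 0 := fun h => hab ((eq_iff_sub_val a b).mpr h)
  have hdlt : |d| < ((p * q : ℕ) : ℤ) := by
    have h1 := ZMod.val_lt a
    have h2 := ZMod.val_lt b
    rw [abs_lt]
    constructor <;> omega
  have hnotpq : Int.gcd d ((p * q : ℕ) : ℤ) ≠ p * q := by
    intro h
    have : ((p * q : ℕ) : ℤ) ∣ d := by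
      conv_lhs => rw [← h]
      exact (Int.gcd_dvd_left _ _)
    exact hd0 (Int.eq_zero_of_abs_lt_dvd this hdlt)
  refine ⟨⟨fun h => ?_, fun h => ?_⟩, hnotpq⟩
  · have : (Int.gcd d ((p * q : ℕ) : ℤ) : ℤ) ∣ d := (Int.gcd_dvd_left _ _)
    rwa [h] at this
  · have hqg : (q : ℤ) ∣ (Int.gcd d ((p * q : ℕ) : ℤ) : ℤ) :=
      Int.dvd_coe_gcd h (by exact_mod_cast Int.natCast_dvd_natCast.mpr ⟨p, mul_comm p q⟩)
    have hqg' : q ∣ Int.gcd d (p * q) := Int.natCast_dvd_natCast.mp hqg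
    rcases dvd_pq_cases hp hq hpq hdn with h1 | h1 | h1 | h1
    · exact absurd (Nat.le_of_dvd one_pos (h1 ▸ hqg')) (by have := hq.two_le; omega)
    · exact absurd ((Nat.prime_dvd_prime_iff_eq hq hp).mp (h1 ▸ hqg')) (Ne.symm hpq)
    · exact h1
    · exact absurd h1 hnotpq



lemma qdvd_congr {n q : ℕ} [NeZero n] (hqn : (q:ℤ) ∣ (n:ℤ)) (x y : ℤ)
    (h : (x : ZMod n) = (y : ZMod n)) : (q:ℤ) ∣ x ↔ (q:ℤ) ∣ y := by
  have hd : (n : ℤ) ∣ x - y := by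
    rwa [← ZMod.intCast_zmod_eq_zero_iff_dvd, Int.cast_sub, sub_eq_zero]
  have hq2 : (q:ℤ) ∣ x - y := hqn.trans hd
  constructor
  · intro hx; have := dvd_sub hx hq2; simpa using this
  · intro hy; have := dvd_add hy hq2; simpa using this

section Graph

variable {p q : ℕ} (hp : p.Prime) (hq : q.Prime) (hpodd : Odd p) (hqodd : Odd q)
  (hpq : p ≠ q) [NeZero (p * q)]

include hp hq hpq

lemma adj_iff {a b : ZMod (p * q)} :
    (ICG (p * q) {1, p}).Adj a b ↔ a ≠ b ∧ ¬ (q : ℤ) ∣ ((a.val : ℤ) - b.val) := by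
  constructor
  · rintro ⟨hab, hmem⟩
    refine ⟨hab, fun hdvd => ?_⟩
    have hgq := ((gcd_classify hp hq hpq hab).1).mpr hdvd
    rw [hgq] at hmem
    rcases Finset.mem_insert.mp hmem with h | h
    · exact absurd h (by have := hq.two_le; omega)
    · exact hpq (Finset.mem_singleton.mp h).symm
  · rintro ⟨hab, hndvd⟩
    refine ⟨hab, ?_⟩
    obtain ⟨hiff, hne⟩ := gcd_classify hp hq hpq hab
    have hdn : Int.gcd ((a.val : ℤ) - b.val) ((p * q : ℕ) : ℤ) ∣ p * q := by
      exact_mod_cast ((Int.gcd_dvd_right _ _) :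
        (Int.gcd ((a.val : ℤ) - b.val) ((p * q : ℕ) : ℤ) : ℤ) ∣ ((p * q : ℕ) : ℤ))
    rcases dvd_pq_cases hp hq hpq hdn with h1 | h1 | h1 | h1
    · rw [h1]; exact Finset.mem_insert_self 1 _
    · rw [h1]; exact Finset.mem_insert.mpr (Or.inr (Finset.mem_singleton_self p))
    · exact absurd (hiff.mp h1) hndvd
    · exact absurd h1 hne

lemma adj_mid {a b : ZMod (p * q)} (hab : a ≠ b)
    (hdvd : (q : ℤ) ∣ ((a.val : ℤ) - b.val)) :
    (ICG (p * q) {1, p}).Adj a (a + 1) ∧ (ICG (p * q) {1, p}).Adj (a + 1) b := by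
  have h2q := hq.two_le
  have h2p := hp.two_le
  have hn1 : 1 < p * q := by nlinarith
  haveI : Fact (1 < p * q) := ⟨hn1⟩
  have hqn : (q : ℤ) ∣ ((p * q : ℕ) : ℤ) := Int.natCast_dvd_natCast.mpr ⟨p, mul_comm p q⟩
  have hone : (1 : ZMod (p * q)) ≠ 0 := by
    intro h
    have := congrArg ZMod.val h
    rw [ZMod.val_one, ZMod.val_zero] at this
    exact one_ne_zero this
  have hq1 : ¬ (q : ℤ) ∣ (1 : ℤ) := by
    intro h
    have := Int.le_of_dvd one_pos h
    omega
  constructor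
  · rw [adj_iff hp hq hpq]
    refine ⟨fun h => hone (left_eq_add.mp h), fun hdd => ?_⟩
    have hcast : (((a.val : ℤ) - (a+1).val : ℤ) : ZMod (p * q)) = ((-1 : ℤ) : ZMod (p * q)) := by
      rw [cast_val_sub]; push_cast; ring
    have := (qdvd_congr hqn _ _ hcast).mp hdd
    exact hq1 (by simpa using this.neg_right)
  · rw [adj_iff hp hq hpq]
    have hcast : ((((a+1).val : ℤ) - b.val : ℤ) : ZMod (p * q)) =
        ((((a.val : ℤ) - b.val) + 1 : ℤ) : ZMod (p * q)) := by
      rw [cast_val_sub]; push_cast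
      rw [ZMod.natCast_val, ZMod.natCast_val, ZMod.cast_id, ZMod.cast_id]; ring
    have hnd1 : ¬ (q : ℤ) ∣ (((a.val : ℤ) - b.val) + 1) := by
      intro h
      exact hq1 (by simpa using dvd_sub h hdvd)
    refine ⟨fun h => ?_, fun hdd => hnd1 ((qdvd_congr hqn _ _ hcast).mp hdd)⟩
    apply hnd1
    have h0 : ((((a+1).val : ℤ) - b.val : ℤ) : ZMod (p * q)) = 0 := by
      rw [cast_val_sub, h, sub_self]
    rw [h0] at hcast
    have := (ZMod.intCast_zmod_eq_zero_iff_dvd _ _).mp hcast.symm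
    exact hqn.trans this

lemma dist_eq (a b : ZMod (p * q)) :
    (ICG (p * q) {1, p}).dist a b =
      if a = b then 0 else if (q : ℤ) ∣ ((a.val : ℤ) - b.val) then 2 else 1 := by
  split_ifs with h1 h2
  · subst h1; exact SimpleGraph.dist_self
  · obtain ⟨hac, hcb⟩ := adj_mid hp hq hpq h1 h2
    set G := ICG (p * q) {1, p}
    have hle : G.dist a b ≤ 2 := by
      have := SimpleGraph.dist_le
        (SimpleGraph.Walk.cons hac (SimpleGraph.Walk.cons hcb SimpleGraph.Walk.nil))
      simpa [SimpleGraph.Walk.length_cons, SimpleGraph.Walk.length_nil] using this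
    have w : G.Walk a b :=
      SimpleGraph.Walk.cons hac (SimpleGraph.Walk.cons hcb SimpleGraph.Walk.nil)
    have h0 : G.dist a b ≠ 0 :=
      SimpleGraph.dist_ne_zero_iff_ne_and_reachable.mpr ⟨h1, ⟨w⟩⟩
    have hne1 : G.dist a b ≠ 1 := by
      intro h
      have := SimpleGraph.dist_eq_one_iff_adj.mp h
      exact ((adj_iff hp hq hpq).mp this).2 h2
    omega
  · exact SimpleGraph.dist_eq_one_iff_adj.mpr ((adj_iff hp hq hpq).mpr ⟨h1, h2⟩)

lemma reachable_all (a b : ZMod (p * q)) : (ICG (p * q) {1, p}).Reachable a b := by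
  by_cases h1 : a = b
  · subst h1; rfl
  by_cases h2 : (q : ℤ) ∣ ((a.val : ℤ) - b.val)
  · obtain ⟨hac, hcb⟩ := adj_mid hp hq hpq h1 h2
    exact ⟨SimpleGraph.Walk.cons hac (SimpleGraph.Walk.cons hcb SimpleGraph.Walk.nil)⟩
  · exact ⟨SimpleGraph.Walk.cons ((adj_iff hp hq hpq).mpr ⟨h1, h2⟩) SimpleGraph.Walk.nil⟩

lemma edist_eq (a b : ZMod (p * q)) :
    (ICG (p * q) {1, p}).edist a b = ((ICG (p * q) {1, p}).dist a b : ℕ∞) := by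
  have hne : (ICG (p * q) {1, p}).edist a b ≠ ⊤ :=
    SimpleGraph.edist_ne_top_iff_reachable.mpr (reachable_all hp hq hpq a b)
  have : (ICG (p * q) {1, p}).dist a b = ((ICG (p * q) {1, p}).edist a b).toNat := rfl
  rw [this, ENat.coe_toNat hne]

lemma diam_eq : (ICG (p * q) {1, p}).diam = 2 := by
  have h2q := hq.two_le
  have h2p := hp.two_le
  have hqlt : q < p * q := by nlinarith
  have hediam : (ICG (p * q) {1, p}).ediam = 2 := by
    apply le_antisymm
    · rw [SimpleGraph.ediam_def]
      apply iSup_le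
      rintro ⟨a, b⟩
      rw [edist_eq hp hq hpq, dist_eq hp hq hpq]
      split_ifs <;> simp
    · have hdist : (ICG (p * q) {1, p}).dist 0 ((q : ℕ) : ZMod (p * q)) = 2 := by
        rw [dist_eq hp hq hpq]
        have hval : (((q : ℕ) : ZMod (p * q))).val = q := ZMod.val_natCast_of_lt hqlt
        have hne0 : (0 : ZMod (p * q)) ≠ ((q : ℕ) : ZMod (p * q)) := by
          intro h
          have := congrArg ZMod.val h
          rw [ZMod.val_zero, hval] at this
          omega
        rw [if_neg hne0, if_pos]
        rw [ZMod.val_zero, hval]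
        exact ⟨-1, by push_cast; ring⟩
      calc (2 : ℕ∞) = (ICG (p * q) {1, p}).edist 0 ((q : ℕ) : ZMod (p * q)) := by
              rw [edist_eq hp hq hpq, hdist]; rfl
        _ ≤ _ := SimpleGraph.edist_le_ediam
  rw [SimpleGraph.diam, hediam]
  rfl


end Graph


lemma fiber_card {p q : ℕ} (hp : 0 < p) (hq : 0 < q) [NeZero (p * q)] [NeZero q]
    (j : ZMod q) :
    (Finset.univ.filter (fun a : ZMod (p * q) => ((a.val : ℕ) : ZMod q) = j)).card = p := by
  apply Finset.card_eq_of_bijective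
    (f := fun i _ => (((j.val + q * i : ℕ) : ZMod (p * q)) : ZMod (p * q)))
  · -- surjective
    intro a ha
    rw [Finset.mem_filter] at ha
    have hval : a.val < p * q := ZMod.val_lt a
    have hmod : a.val % q = j.val := by
      have := congrArg ZMod.val ha.2
      rwa [ZMod.val_natCast] at this
    refine ⟨a.val / q, ?_, ?_⟩
    · rw [Nat.div_lt_iff_lt_mul hq]; omega
    · rw [show j.val + q * (a.val / q) = a.val by rw [← hmod, Nat.mod_add_div]]
      exact ZMod.natCast_rightInverse a
  · -- membership
    intro i hi
    have hjv : j.val < q := ZMod.val_lt j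
    have hlt : j.val + q * i < p * q := by
      calc j.val + q * i < q + q * i := by omega
        _ = q * (i + 1) := by ring
        _ ≤ q * p := Nat.mul_le_mul_left q (by omega)
        _ = p * q := mul_comm q p
    rw [Finset.mem_filter]
    refine ⟨Finset.mem_univ _, ?_⟩
    rw [ZMod.val_natCast_of_lt hlt]
    push_cast
    rw [ZMod.natCast_self]
    simpa using ZMod.natCast_rightInverse j
  · -- injective
    intro i i' hi hi' h
    have hjv : j.val < q := ZMod.val_lt j
    have hlt : ∀ m, m < p → j.val + q * m < p * q := by
      intro m hm
      calc j.val + q * m < q + q * m := by omega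
        _ = q * (m + 1) := by ring
        _ ≤ q * p := Nat.mul_le_mul_left q (by omega)
        _ = p * q := mul_comm q p
    have := congrArg ZMod.val h
    rw [ZMod.val_natCast_of_lt (hlt i hi), ZMod.val_natCast_of_lt (hlt i' hi')] at this
    have : q * i = q * i' := by omega
    exact Nat.eq_of_mul_eq_mul_left hq this


variable {K : Type} [Field K]

noncomputable def Umat (p q : ℕ) (K : Type) [Field K] : Matrix (ZMod (p * q)) (ZMod q) K :=
  Matrix.of fun a j => if ((a.val : ℕ) : ZMod q) = j then 1 else 0

noncomputable def Mmat (q : ℕ) (K : Type) [Field K] : Matrix (ZMod q) (ZMod q) K :=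
  Matrix.of fun j k => if j = k then 2 else 1

lemma UMU_apply (p q : ℕ) [NeZero (p * q)] [NeZero q] (a b : ZMod (p * q)) :
    (Umat p q K * Mmat q K * (Umat p q K)ᵀ) a b =
      Mmat q K ((a.val : ℕ) : ZMod q) ((b.val : ℕ) : ZMod q) := by
  rw [Matrix.mul_apply]
  have h1 : ∀ k, (Umat p q K * Mmat q K) a k = Mmat q K ((a.val : ℕ) : ZMod q) k := by
    intro k
    rw [Matrix.mul_apply]
    simp only [Umat, Mmat, Matrix.of_apply, ite_mul, one_mul, zero_mul]
    rw [Finset.sum_ite_eq Finset.univ ((a.val : ℕ) : ZMod q)]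
    simp only [Finset.mem_univ, if_true]
  simp only [Matrix.transpose_apply, h1]
  simp only [Umat, Matrix.of_apply, mul_ite, mul_one, mul_zero]
  rw [Finset.sum_ite_eq Finset.univ ((b.val : ℕ) : ZMod q)]
  simp only [Finset.mem_univ, if_true]

lemma UtU (p q : ℕ) (hp : 0 < p) (hq : 0 < q) [NeZero (p * q)] [NeZero q]
    (hcard : ∀ j : ZMod q,
      (Finset.univ.filter (fun a : ZMod (p * q) => ((a.val : ℕ) : ZMod q) = j)).card = p) :
    (Umat p q K)ᵀ * Umat p q K = (p : K) • 1 := by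
  ext j k
  rw [Matrix.mul_apply]
  simp only [Matrix.transpose_apply, Umat, Matrix.of_apply]
  by_cases hjk : j = k
  · subst hjk
    have : ∀ a : ZMod (p * q), (if ((a.val : ℕ) : ZMod q) = j then (1:K) else 0) *
        (if ((a.val : ℕ) : ZMod q) = j then (1:K) else 0) =
        (if ((a.val : ℕ) : ZMod q) = j then (1:K) else 0) := by
      intro a; split_ifs <;> ring
    rw [Finset.sum_congr rfl (fun a _ => this a), Finset.sum_boole, hcard j]
    simp
  · have : ∀ a : ZMod (p * q), (if ((a.val : ℕ) : ZMod q) = j then (1:K) else 0) *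
        (if ((a.val : ℕ) : ZMod q) = k then (1:K) else 0) = 0 := by
      intro a
      split_ifs with h1 h2 <;> simp_all
    rw [Finset.sum_congr rfl (fun a _ => this a), Finset.sum_const_zero]
    simp [Matrix.one_apply_ne hjk]


lemma det_UMU {p q : ℕ} (hp1 : 1 ≤ p) (hq1 : 1 ≤ q) [NeZero (p * q)] [NeZero q]
    {K : Type} [Field K]
    (hcard : ∀ j : ZMod q,
      (Finset.univ.filter (fun a : ZMod (p * q) => ((a.val : ℕ) : ZMod q) = j)).card = p)
    (s : K) (hs : s ≠ 0) (hr : s - p ≠ 0) :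
    Matrix.det (s • (1 : Matrix (ZMod (p*q)) (ZMod (p*q)) K)
        - Umat p q K * Mmat q K * (Umat p q K)ᵀ)
      = s ^ (p * q - q) * (s - (p : K)) ^ (q - 1) * (s - (p : K) - (p : K) * q) := by
  set U := Umat p q K
  set M := Mmat q K
  set r : K := s - (p : K) with hrdef
  have hcardn : Fintype.card (ZMod (p * q)) = p * q := ZMod.card _
  have hcardq : Fintype.card (ZMod q) = q := ZMod.card _
  have hUtU : Uᵀ * U = (p : K) • 1 := UtU p q hp1 hq1 hcard
  -- step 1 : pull out s
  have e1 : s • (1 : Matrix (ZMod (p*q)) (ZMod (p*q)) K) - U * M * Uᵀ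
      = s • (1 - U * ((s⁻¹ • M) * Uᵀ)) := by
    rw [smul_sub]
    congr 1
    rw [← Matrix.mul_assoc, Matrix.mul_smul, Matrix.smul_mul, smul_smul,
      mul_inv_cancel₀ hs, one_smul]
  rw [e1, Matrix.det_smul, hcardn]
  -- step 2 : Weinstein–Aronszajn
  rw [Matrix.det_one_sub_mul_comm]
  have e3 : (s⁻¹ • M) * Uᵀ * U = (s⁻¹ * p) • M := by
    rw [Matrix.mul_assoc, hUtU, Matrix.mul_smul, Matrix.mul_one, smul_smul, mul_comm (p:K) _]
  rw [e3]
  have e4 : (1 : Matrix (ZMod q) (ZMod q) K) - (s⁻¹ * ↑p) • M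
      = s⁻¹ • (s • 1 - (p : K) • M) := by
    rw [smul_sub, smul_smul, inv_mul_cancel₀ hs, one_smul, smul_smul]
  rw [e4, Matrix.det_smul, hcardq]
  -- step 3 : the q × q determinant
  have e5 : s • (1 : Matrix (ZMod q) (ZMod q) K) - (p : K) • M
      = r • (1 + Matrix.replicateCol Unit (fun _ => -(r⁻¹ * p)) * Matrix.replicateRow Unit (fun _ => (1:K))) := by
    ext j k
    simp only [Matrix.sub_apply, Matrix.smul_apply, Matrix.add_apply, Matrix.mul_apply,
      Matrix.replicateCol_apply, Matrix.replicateRow_apply, Finset.univ_unique, Finset.sum_singleton,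
      M, Mmat, Matrix.of_apply, smul_eq_mul]
    by_cases hjk : j = k
    · subst hjk
      simp only [Matrix.one_apply_eq, if_pos rfl, if_true]
      field_simp
      rw [hrdef]; ring
    · simp only [Matrix.one_apply_ne hjk, if_neg hjk]
      field_simp
      ring
  rw [e5, Matrix.det_smul, hcardq, Matrix.det_one_add_replicateCol_mul_replicateRow]
  have e6 : ((fun _ : ZMod q => (1:K)) ⬝ᵥ fun _ : ZMod q => -(r⁻¹ * (p : K))) = -((q : K) * (r⁻¹ * (p:K))) := by
    rw [dotProduct]
    simp only [one_mul, Finset.sum_const, Finset.card_univ, hcardq, nsmul_eq_mul]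
    ring
  rw [e6]
  -- combine
  have hqle : q ≤ p * q := Nat.le_mul_of_pos_left q hp1
  have hs2 : s ^ (p * q) * s⁻¹ ^ q = s ^ (p * q - q) := by
    have h1 : p * q - q + q = p * q := by omega
    have h0 : s ^ (p * q) = s ^ (p * q - q) * s ^ q := by rw [← pow_add, h1]
    rw [h0, mul_assoc, ← mul_pow, mul_inv_cancel₀ hs, one_pow, mul_one]
  have hr2 : r ^ q * (1 + -((q : K) * (r⁻¹ * (p:K)))) = r ^ (q - 1) * (r - (p : K) * q) := by
    have h0 : r ^ q = r ^ (q - 1) * r := by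
      conv_lhs => rw [show q = (q - 1) + 1 by omega]
      rw [pow_succ]
    rw [h0]
    field_simp
    ring
  trans ((s ^ (p * q) * s⁻¹ ^ q) * (r ^ q * (1 + -((q : K) * (r⁻¹ * (p:K))))) : K)
  · ring
  · rw [hs2, hr2]; ring


end ICGAux

namespace ICGAux

open Polynomial Matrix

lemma charpoly_phi {m : Type} [Fintype m] [DecidableEq m] (A : Matrix m m ℝ) :
    algebraMap ℝ[X] (RatFunc ℝ) A.charpoly =
    Matrix.det ((algebraMap ℝ[X] (RatFunc ℝ) X) • (1 : Matrix m m (RatFunc ℝ))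
      - A.map ((algebraMap ℝ[X] (RatFunc ℝ)).comp (C : ℝ →+* ℝ[X]))) := by
  rw [Matrix.charpoly, RingHom.map_det]
  congr 1
  ext i j
  by_cases h : i = j
  · subst h
    simp [Matrix.charmatrix_apply_eq, Matrix.map_apply, Matrix.sub_apply,
      Matrix.smul_apply, Matrix.one_apply_eq]
  · simp [Matrix.charmatrix_apply_ne _ _ _ h, Matrix.map_apply, Matrix.sub_apply,
      Matrix.smul_apply, Matrix.one_apply_ne h]

lemma distMatrix_factor {p q : ℕ} (hp : p.Prime) (hq : q.Prime) (hpq : p ≠ q)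
    [NeZero (p * q)] [NeZero q] :
    (distMatrix (ICG (p * q) {1, p})).map ((algebraMap ℝ[X] (RatFunc ℝ)).comp (C : ℝ →+* ℝ[X]))
      = Umat p q (RatFunc ℝ) * Mmat q (RatFunc ℝ) * (Umat p q (RatFunc ℝ))ᵀ
        - (2 : RatFunc ℝ) • (1 : Matrix (ZMod (p * q)) (ZMod (p * q)) (RatFunc ℝ)) := by
  ext a b
  have hgg : (((a.val : ℕ) : ZMod q) = ((b.val : ℕ) : ZMod q)) ↔
      (q : ℤ) ∣ ((a.val : ℤ) - b.val) := by
    rw [ZMod.natCast_eq_natCast_iff, Nat.modEq_iff_dvd, dvd_sub_comm]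
  simp only [Matrix.sub_apply, Matrix.map_apply, distMatrix, Matrix.of_apply, Matrix.smul_apply]
  rw [UMU_apply, dist_eq hp hq hpq]
  by_cases h1 : a = b
  · subst h1
    rw [if_pos rfl]
    simp only [Nat.cast_zero, map_zero, Mmat, Matrix.of_apply, if_pos rfl,
      Matrix.one_apply_eq, smul_eq_mul, mul_one]
    norm_num
  · rw [if_neg h1]
    by_cases h2 : (q : ℤ) ∣ ((a.val : ℤ) - b.val)
    · rw [if_pos h2]
      have hgeq := hgg.mpr h2
      simp only [Nat.cast_ofNat, map_ofNat, Mmat, Matrix.of_apply, if_pos hgeq,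
        Matrix.one_apply_ne h1, smul_eq_mul, mul_zero, sub_zero]
    · rw [if_neg h2]
      have hgne : ¬ (((a.val : ℕ) : ZMod q) = ((b.val : ℕ) : ZMod q)) :=
        fun hh => h2 (hgg.mp hh)
      simp only [Nat.cast_one, _root_.map_one, Mmat, Matrix.of_apply, if_neg hgne,
        Matrix.one_apply_ne h1, smul_eq_mul, mul_zero, sub_zero]

lemma charpoly_eq {p q : ℕ} (hp : p.Prime) (hq : q.Prime) (hpq : p ≠ q) [NeZero (p * q)] :
    (distMatrix (ICG (p * q) {1, p})).charpoly =
      (X + C 2) ^ (p * q - q) *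
        (X - C ((p : ℝ) - 2)) ^ (q - 1) *
        (X - C ((p : ℝ) * q + p - 2)) := by
  haveI : NeZero q := ⟨hq.pos.ne'⟩
  have hp1 : 1 ≤ p := hp.pos
  have hq1 : 1 ≤ q := hq.pos
  have hinj := IsFractionRing.injective (Polynomial ℝ) (RatFunc ℝ)
  apply hinj
  set φ : ℝ[X] →+* RatFunc ℝ := (algebraMap ℝ[X] (RatFunc ℝ) : ℝ[X] →+* RatFunc ℝ) with hφ
  set f : ℝ →+* RatFunc ℝ := φ.comp (C : ℝ →+* ℝ[X]) with hfdef
  set t : RatFunc ℝ := φ X with ht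
  have hC : ∀ r : ℝ, φ ((C : ℝ →+* ℝ[X]) r) = f r := fun r => rfl
  have hC2 : φ ((C : ℝ →+* ℝ[X]) 2) = 2 := by rw [hC, map_ofNat f 2]
  have hCn : ∀ m : ℕ, φ ((C : ℝ →+* ℝ[X]) (m : ℝ)) = (m : RatFunc ℝ) := by
    intro m; rw [hC, map_natCast f m]
  have hs : t + 2 ≠ 0 := by
    intro hcon
    apply Polynomial.X_add_C_ne_zero (2 : ℝ)
    apply hinj
    rw [map_zero, map_add, hC2]
    exact hcon
  have hr : t + 2 - (p : RatFunc ℝ) ≠ 0 := by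
    intro hcon
    apply Polynomial.X_add_C_ne_zero (2 - (p : ℝ))
    apply hinj
    rw [map_zero, map_add, hC, map_sub f, map_ofNat f 2, map_natCast f p]
    rw [show t + 2 - (p : RatFunc ℝ) = t + (2 - (p : RatFunc ℝ)) by ring] at hcon
    exact hcon
  have hcard : ∀ j : ZMod q,
      (Finset.univ.filter (fun a : ZMod (p * q) => ((a.val : ℕ) : ZMod q) = j)).card = p :=
    fun j => fiber_card hp.pos hq.pos j
  rw [charpoly_phi, distMatrix_factor hp hq hpq]
  have hrw : t • (1 : Matrix (ZMod (p * q)) (ZMod (p * q)) (RatFunc ℝ))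
        - (Umat p q (RatFunc ℝ) * Mmat q (RatFunc ℝ) * (Umat p q (RatFunc ℝ))ᵀ
            - (2 : RatFunc ℝ) • 1)
      = (t + 2) • 1 - Umat p q (RatFunc ℝ) * Mmat q (RatFunc ℝ) * (Umat p q (RatFunc ℝ))ᵀ := by
    ext i j
    simp only [Matrix.sub_apply, Matrix.smul_apply, smul_eq_mul]
    ring
  rw [hrw, det_UMU hp1 hq1 hcard (t + 2) hs hr]
  simp only [_root_.map_mul, map_pow, _root_.map_add, _root_.map_sub, hC,
    map_natCast, map_ofNat, ← ht]
  rw [show t + 2 - (p : RatFunc ℝ) = t - ((p : RatFunc ℝ) - 2) by ring]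
  rw [show t - ((p : RatFunc ℝ) - 2) - (p : RatFunc ℝ) * (q : RatFunc ℝ)
      = t - ((p : RatFunc ℝ) * q + (p : RatFunc ℝ) - 2) by ring]

end ICGAux

open ICGAux in
/-- for distinct odd primes `p, q` and `n = pq`, the graph `ICG_n({1, p})` has
diameter `2`, two vertices are at distance `2` iff `gcd(a - b, n) = q`, and the spectrum of
its distance matrix is `-2` with multiplicity `pq - q`, `p - 2` with multiplicity `q - 1`,
and `pq + p - 2` with multiplicity `1`. -/
theorem distSpectrum_ICG_pq_one_p (p q : ℕ) (hp : p.Prime) (hq : q.Prime) (hpodd : Odd p)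
    (hqodd : Odd q) (hpq : p ≠ q) (n : ℕ) [NeZero n] (hn : n = p * q) :
    (ICG n {1, p}).diam = 2 ∧
    (∀ a b : ZMod n, (ICG n {1, p}).dist a b = 2 ↔
      Int.gcd ((a.val : ℤ) - (b.val : ℤ)) n = q) ∧
    (distMatrix (ICG n {1, p})).charpoly =
      (Polynomial.X + Polynomial.C 2) ^ (p * q - q) *
        (Polynomial.X - Polynomial.C ((p : ℝ) - 2)) ^ (q - 1) *
        (Polynomial.X - Polynomial.C ((p : ℝ) * q + p - 2)) := by
  subst hn
  haveI : NeZero q := ⟨hq.pos.ne'⟩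
  refine ⟨diam_eq hp hq hpq, fun a b => ?_, charpoly_eq hp hq hpq⟩
  constructor
  · intro hd
    have hab : a ≠ b := by
      intro h
      rw [h, SimpleGraph.dist_self] at hd
      exact two_ne_zero hd.symm
    rw [dist_eq hp hq hpq, if_neg hab] at hd
    by_cases h2 : (q : ℤ) ∣ ((a.val : ℤ) - b.val)
    · exact ((gcd_classify hp hq hpq hab).1).mpr h2
    · rw [if_neg h2] at hd; exact absurd hd (by norm_num)
  · intro hg
    have hab : a ≠ b := by
      intro h
      subst h
      rw [sub_self, Int.gcd_zero_left, Int.natAbs_natCast] at hg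
      have h2p := hp.two_le
      have h1q := hq.one_le
      nlinarith [hg]
    rw [dist_eq hp hq hpq, if_neg hab,
      if_pos (((gcd_classify hp hq hpq hab).1).mp hg)]
end

section
/- Let p and q be distinct odd primes and n = pq. Then the distance energy of the graph ICG_n({1, p}) equals DE(ICG_n({1, p})) = 4q(p − 1). -/
open scoped Classical

open Matrix Kronecker in
lemma det_aux {K : Type} [Field K] {m : Type} [Fintype m] [DecidableEq m] [Nonempty m] {c : K}
    (hc : c ≠ 0) :
    (c • (1 : Matrix m m K) - Matrix.of (fun _ _ => (1:K))).det
      = c ^ (Fintype.card m - 1) * (c - Fintype.card m) := by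
  have h1 : c • (1 : Matrix m m K) - Matrix.of (fun _ _ => (1:K))
      = c • ((1 : Matrix m m K) + replicateCol Unit (fun _ : m => -c⁻¹) * replicateRow Unit (fun _ : m => (1:K))) := by
    ext i j
    by_cases h : i = j <;>
      simp [h, Matrix.mul_apply, Matrix.one_apply, Matrix.replicateCol_apply, Matrix.replicateRow_apply,
        mul_add, hc, sub_eq_add_neg]
  rw [h1, det_smul, det_one_add_replicateCol_mul_replicateRow]
  simp only [dotProduct, Finset.sum_const, Finset.card_univ, nsmul_eq_mul, mul_neg, mul_one]
  obtain ⟨k, hk⟩ : ∃ k, Fintype.card m = k + 1 :=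
    ⟨_, (Nat.succ_pred_eq_of_pos Fintype.card_pos).symm⟩
  rw [hk]
  simp only [Nat.add_sub_cancel, pow_succ, Nat.cast_add, Nat.cast_one]
  field_simp
  ring

open Matrix Kronecker in
lemma det_main {K : Type} [Field K] (p q : ℕ) [NeZero p] [NeZero q] (c : K)
    (hc : c ≠ 0) (hcp : c - (p:K) ≠ 0) :
    (Matrix.of fun a b : ZMod p × ZMod q =>
      (if a = b then c else 0) - (if a.2 = b.2 then (1:K) else 0) - 1).det
      = c ^ ((p-1)*q) * (c - p) ^ (q-1) * (c - p - p*q) := by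
  set α : K := (c * (c - p))⁻¹ with hα_def
  set Jp : Matrix (ZMod p) (ZMod p) K := Matrix.of (fun _ _ => (1:K)) with hJp_def
  set Dp : Matrix (ZMod p) (ZMod p) K := c • 1 - Jp with hDp_def
  set Dp' : Matrix (ZMod p) (ZMod p) K := c⁻¹ • 1 + α • Jp with hDp'_def
  have hJp2 : Jp * Jp = (p:K) • Jp := by
    ext i j
    simp [hJp_def, Matrix.mul_apply, Finset.sum_const, Finset.card_univ, ZMod.card,
      nsmul_eq_mul]
  have hα : c * α = c⁻¹ + α * p := by
    rw [hα_def]; field_simp; ring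
  have hDp : Dp * Dp' = 1 := by
    rw [hDp_def, hDp'_def]
    simp only [Matrix.sub_mul, Matrix.mul_add, Matrix.smul_mul, Matrix.mul_smul,
      Matrix.one_mul, Matrix.mul_one, hJp2, smul_smul]
    have h2 : α * c - α * (p:K) = c⁻¹ := by rw [hα_def]; field_simp
    rw [smul_sub, smul_sub, smul_smul, smul_smul, smul_smul, inv_mul_cancel₀ hc, one_smul,
      ← sub_smul, h2]
    abel
  set A : Matrix (ZMod p × ZMod q) (ZMod p × ZMod q) K := Dp ⊗ₖ 1 with hA_def
  have hAA' : A * (Dp' ⊗ₖ 1) = 1 := by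
    rw [hA_def, ← Matrix.mul_kronecker_mul, hDp, Matrix.one_mul, Matrix.one_kronecker_one]
  have key : (Matrix.of fun a b : ZMod p × ZMod q =>
      (if a = b then c else 0) - (if a.2 = b.2 then (1:K) else 0) - 1)
      = A - Matrix.of (fun _ _ => (1:K)) := by
    ext ⟨i,t⟩ ⟨j,u⟩
    simp only [Matrix.of_apply, hA_def, Matrix.kroneckerMap_apply, hDp_def, hJp_def,
      Matrix.sub_apply, Matrix.smul_apply, Matrix.one_apply, Matrix.of_apply, smul_eq_mul]
    by_cases h1 : i = j <;> by_cases h2 : t = u <;>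
      simp [h1, h2, Prod.ext_iff]
  have hσ : (Dp' ⊗ₖ (1 : Matrix (ZMod q) (ZMod q) K)) * Matrix.of (fun _ _ => (1:K))
      = Matrix.of (fun _ _ => (c - p)⁻¹) := by
    ext ⟨i,t⟩ b
    rw [Matrix.mul_apply, Fintype.sum_prod_type]
    simp only [Matrix.kroneckerMap_apply, Matrix.of_apply, mul_one, hDp'_def,
      Matrix.add_apply, Matrix.smul_apply, Matrix.one_apply, hJp_def, Matrix.of_apply,
      smul_eq_mul, mul_ite, mul_one, mul_zero]
    rw [Finset.sum_comm]
    simp [Finset.sum_ite_eq, Finset.sum_add_distrib, Finset.sum_const, Finset.card_univ,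
      ZMod.card, nsmul_eq_mul]
    field_simp
    rw [hα_def]
    field_simp
    ring
  have hfac : A - Matrix.of (fun _ _ => (1:K))
      = A * (1 - (Dp' ⊗ₖ 1) * Matrix.of (fun _ _ => (1:K))) := by
    rw [Matrix.mul_sub, Matrix.mul_one, ← Matrix.mul_assoc, hAA', Matrix.one_mul]
  have hdetA : A.det = (c ^ (p-1) * (c - p)) ^ q := by
    rw [hA_def, Matrix.det_kronecker, Matrix.det_one, one_pow, mul_one]
    rw [det_aux hc]
    simp [ZMod.card]
  have hdetJ : (1 - (Dp' ⊗ₖ (1 : Matrix (ZMod q) (ZMod q) K)) * Matrix.of (fun _ _ => (1:K))).det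
      = 1 - (p*q : ℕ) * (c - p)⁻¹ := by
    rw [hσ]
    have h2 : (1 : Matrix (ZMod p × ZMod q) (ZMod p × ZMod q) K) - Matrix.of (fun _ _ => (c-p)⁻¹)
        = 1 + replicateCol Unit (fun _ : ZMod p × ZMod q => -(c-p)⁻¹) *
            replicateRow Unit (fun _ : ZMod p × ZMod q => (1:K)) := by
      ext a b
      by_cases h : a = b <;>
        simp [h, Matrix.mul_apply, Matrix.one_apply, Matrix.replicateCol_apply, Matrix.replicateRow_apply,
          sub_eq_add_neg]
    rw [h2, det_one_add_replicateCol_mul_replicateRow]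
    simp [dotProduct, Finset.sum_const, Finset.card_univ, ZMod.card, nsmul_eq_mul]
    ring
  rw [key, hfac, Matrix.det_mul, hdetA, hdetJ]
  obtain ⟨k, hk⟩ : ∃ k, q = k + 1 := ⟨_, (Nat.succ_pred_eq_of_pos (NeZero.pos q)).symm⟩
  rw [hk]
  simp only [Nat.add_sub_cancel, pow_succ, mul_pow, Nat.cast_mul]
  push_cast
  field_simp
  ring

lemma gcd_mem_pair {p q : ℕ} (hp : p.Prime) (hq : q.Prime) (hpq : p ≠ q) (d : ℤ) :
    Int.gcd d ((p*q : ℕ) : ℤ) ∈ ({1, p} : Finset ℕ) ↔ ¬ (q:ℤ) ∣ d := by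
  constructor
  · intro hmem hdvd
    have hqg : q ∣ Int.gcd d ((p*q : ℕ) : ℤ) := by
      have h1 : (q:ℤ) ∣ (Int.gcd d ((p*q : ℕ) : ℤ) : ℤ) :=
        Int.dvd_coe_gcd hdvd ⟨(p:ℤ), by push_cast; ring⟩
      exact_mod_cast h1
    simp only [Finset.mem_insert, Finset.mem_singleton] at hmem
    rcases hmem with h1 | h1 <;> rw [h1] at hqg
    · exact hq.one_lt.ne' (Nat.dvd_one.mp hqg)
    · exact hpq ((Nat.prime_dvd_prime_iff_eq hq hp).mp hqg).symm
  · intro hndvd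
    set g := Int.gcd d ((p*q : ℕ) : ℤ) with hg_def
    have hgpq : g ∣ p * q := by
      have := Int.gcd_dvd_right (a := d) (b := ((p*q : ℕ) : ℤ))
      exact_mod_cast this
    have hqg : ¬ q ∣ g := by
      intro h
      exact hndvd (dvd_trans (by exact_mod_cast h) (Int.gcd_dvd_left (a := d) (b := ((p*q : ℕ) : ℤ))))
    have hco : Nat.Coprime g q := ((Nat.Prime.coprime_iff_not_dvd hq).mpr hqg).symm
    have hgp : g ∣ p := hco.dvd_of_dvd_mul_right hgpq
    rcases (Nat.Prime.eq_one_or_self_of_dvd hp g hgp) with h | h <;> simp [h]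

set_option maxHeartbeats 1000000 in
/-- for distinct odd primes `p, q` and `n = pq`, the distance energy of
`ICG_n({1, p})` equals `4q(p-1)`. -/
theorem distEnergy_ICG_pq_one_p (p q : ℕ) (hp : p.Prime) (hq : q.Prime) (hpodd : Odd p)
    (hqodd : Odd q) (hpq : p ≠ q) (n : ℕ) [NeZero n] (hn : n = p * q) :
    distEnergy (ICG n {1, p}) = 4 * (q : ℝ) * ((p : ℝ) - 1) := by
  subst hn
  haveI : NeZero p := ⟨hp.pos.ne'⟩
  haveI : NeZero q := ⟨hq.pos.ne'⟩
  have hp2 : p ≠ 2 := by rintro rfl; exact (Nat.not_odd_iff_even.mpr even_two) hpodd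
  have hq2 : q ≠ 2 := by rintro rfl; exact (Nat.not_odd_iff_even.mpr even_two) hqodd
  have hp3 : 3 ≤ p := by have := hp.two_le; omega
  have hq3 : 3 ≤ q := by have := hq.two_le; omega
  haveI : Fact (1 < p*q) := ⟨by nlinarith⟩
  haveI : Fact (1 < q) := ⟨by omega⟩
  have hqdvd : q ∣ p * q := ⟨p, mul_comm p q⟩
  set f : ZMod (p*q) →+* ZMod q := ZMod.castHom hqdvd (ZMod q) with hf_def
  have hcond : ∀ i j : ZMod (p*q), ((q:ℤ) ∣ ((i.val:ℤ) - (j.val:ℤ))) ↔ f i = f j := by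
    intro i j
    rw [← ZMod.intCast_zmod_eq_zero_iff_dvd]
    push_cast
    rw [sub_eq_zero, hf_def]
    rw [ZMod.natCast_val, ZMod.natCast_val, ZMod.castHom_apply, ZMod.castHom_apply]
  have hadj : ∀ i j : ZMod (p*q), (ICG (p*q) {1, p}).Adj i j ↔ (i ≠ j ∧ ¬ f i = f j) := by
    intro i j
    show (i ≠ j ∧ _) ↔ _
    rw [gcd_mem_pair hp hq hpq, hcond]
  have hone : (1 : ZMod (p*q)) ≠ 0 := one_ne_zero
  have honeq : (1 : ZMod q) ≠ 0 := one_ne_zero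
  set Mreal : Matrix (ZMod (p*q)) (ZMod (p*q)) ℝ :=
    Matrix.of (fun i j => if i = j then (0:ℝ) else if f i = f j then 2 else 1) with hM_def
  have hdist : distMatrix (ICG (p*q) {1, p}) = Mreal := by
    ext i j
    simp only [distMatrix, Matrix.of_apply, hM_def]
    by_cases hij : i = j
    · simp [hij]
    · by_cases hb : f i = f j
      · rw [if_neg hij, if_pos hb]
        have hna : ¬ (ICG (p*q) {1, p}).Adj i j := by rw [hadj]; tauto
        have h1 : (ICG (p*q) {1, p}).Adj i (i+1) := by
          rw [hadj]
          constructor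
          · intro h
            exact hone (add_left_cancel ((add_zero i).trans h)).symm
          · intro h
            rw [map_add, map_one] at h
            exact honeq (add_left_cancel (h.symm.trans (add_zero (f i)).symm))
        have h2 : (ICG (p*q) {1, p}).Adj (i+1) j := by
          rw [hadj]
          constructor
          · intro h
            have h3 := congrArg f h
            rw [map_add, map_one, ← hb] at h3
            exact honeq (add_left_cancel (h3.trans (add_zero (f i)).symm))
          · intro h
            rw [map_add, map_one, ← hb] at h
            exact honeq (add_left_cancel (h.trans (add_zero (f i)).symm))
        have hw : (ICG (p*q) {1, p}).Walk i j := SimpleGraph.Walk.cons h1 h2.toWalk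
        have hle : (ICG (p*q) {1, p}).dist i j ≤ 2 := by
          simpa using SimpleGraph.dist_le (SimpleGraph.Walk.cons h1 h2.toWalk)
        have h0 : (ICG (p*q) {1, p}).dist i j ≠ 0 := by
          intro h
          rcases SimpleGraph.dist_eq_zero_iff_eq_or_not_reachable.mp h with h' | h'
          · exact hij h'
          · exact h' ⟨hw⟩
        have hno1 : (ICG (p*q) {1, p}).dist i j ≠ 1 := fun h =>
          hna (SimpleGraph.dist_eq_one_iff_adj.mp h)
        have h2' : (ICG (p*q) {1, p}).dist i j = 2 := by omega
        rw [h2']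
        norm_num
      · rw [if_neg hij, if_neg hb]
        have h1' : (ICG (p*q) {1, p}).dist i j = 1 :=
          SimpleGraph.dist_eq_one_iff_adj.mpr ((hadj i j).mpr ⟨hij, hb⟩)
        rw [h1']
        norm_num
  -- CRT equivalence
  have hco : Nat.Coprime p q := (Nat.coprime_primes hp hq).mpr hpq
  set g := ZMod.chineseRemainder hco with hg_def
  have hproj : ∀ x : ZMod (p*q), (g x).2 = f x := by
    intro x
    rw [hg_def, hf_def, ZMod.castHom_apply]
    simp [ZMod.chineseRemainder, ZMod.castHom_apply, Prod.snd_zmod_cast]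
  set e : ZMod p × ZMod q ≃ ZMod (p*q) := g.toEquiv.symm with he_def
  have hproj' : ∀ a : ZMod p × ZMod q, f (e a) = a.2 := by
    intro a
    rw [← hproj]
    rw [he_def]
    simp
  set φ := algebraMap (Polynomial ℝ) (RatFunc ℝ) with hφ_def
  have hinj : Function.Injective φ := IsFractionRing.injective (Polynomial ℝ) (RatFunc ℝ)
  set c : RatFunc ℝ := φ Polynomial.X + 2 with hc_def
  have hφC : ∀ r : ℝ, φ (Polynomial.C r) = RatFunc.C r := fun r => RatFunc.algebraMap_C r
  have hc0 : c ≠ 0 := by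
    rw [hc_def, show (2 : RatFunc ℝ) = φ (Polynomial.C 2) by rw [hφC]; exact (map_ofNat RatFunc.C 2).symm, ← map_add]
    intro h
    have h2 := hinj (h.trans (map_zero φ).symm)
    simpa using congrArg (Polynomial.coeff · 1) h2
  have hcp : c - ((p:ℕ) : RatFunc ℝ) ≠ 0 := by
    rw [hc_def, show (2 : RatFunc ℝ) = φ (Polynomial.C 2) by rw [hφC]; exact (map_ofNat RatFunc.C 2).symm,
      show ((p:ℕ) : RatFunc ℝ) = φ ((p:ℕ) : Polynomial ℝ) by rw [map_natCast],
      ← map_add, ← map_sub]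
    intro h
    have h2 := hinj (h.trans (map_zero φ).symm)
    simpa using congrArg (Polynomial.coeff · 1) h2
  have hchar : Mreal.charpoly
      = (Polynomial.X - Polynomial.C (-2:ℝ)) ^ (p*q - q)
        * ((Polynomial.X - Polynomial.C ((p:ℝ) - 2)) ^ (q - 1)
        * (Polynomial.X - Polynomial.C ((p:ℝ)*(q:ℝ) + (p:ℝ) - 2))) := by
    apply hinj
    rw [Matrix.charpoly, RingHom.map_det]
    rw [← Matrix.det_submatrix_equiv_self e]
    have hsub : ((RingHom.mapMatrix φ) (Matrix.charmatrix Mreal)).submatrix e e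
        = Matrix.of (fun a b : ZMod p × ZMod q =>
            (if a = b then c else 0) - (if a.2 = b.2 then (1:RatFunc ℝ) else 0) - 1) := by
      ext a b
      have heab : (e a = e b) ↔ (a = b) := e.apply_eq_iff_eq
      have hfe : (f (e a) = f (e b)) ↔ (a.2 = b.2) := by rw [hproj', hproj']
      simp only [Matrix.submatrix_apply, RingHom.mapMatrix_apply, Matrix.map_apply,
        Matrix.charmatrix_apply, Matrix.diagonal_apply, Matrix.of_apply, hM_def,
        Matrix.of_apply]
      by_cases hab : a = b
      · have hee : e a = e b := heab.mpr hab
        have h2 : a.2 = b.2 := by rw [hab]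
        rw [if_pos hee, if_pos hee, if_pos hab, if_pos h2, map_sub, hφC, map_zero, hc_def]
        ring
      · have hee : ¬ e a = e b := fun h => hab (heab.mp h)
        by_cases h2 : a.2 = b.2
        · rw [if_neg hee, if_neg hee, if_neg hab, if_pos h2, if_pos (hfe.mpr h2),
            map_sub, map_zero, hφC, map_ofNat]
          ring
        · rw [if_neg hee, if_neg hee, if_neg hab, if_neg h2, if_neg (fun h => h2 (hfe.mp h)),
            map_sub, map_zero, hφC, map_one]
          ring
    rw [hsub, det_main p q c hc0 hcp]
    rw [map_mul, map_mul, map_pow, map_pow]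
    have e1 : φ (Polynomial.X - Polynomial.C (-2:ℝ)) = c := by
      rw [map_sub, hφC, hc_def]
      rw [show RatFunc.C (-2:ℝ) = -(2:RatFunc ℝ) by rw [map_neg, map_ofNat]]
      ring
    have e2 : φ (Polynomial.X - Polynomial.C ((p:ℝ) - 2)) = c - p := by
      rw [map_sub, hφC, hc_def]
      rw [show RatFunc.C ((p:ℝ) - 2) = ((p:ℕ) : RatFunc ℝ) - 2 by
        rw [map_sub, map_natCast, map_ofNat]]
      ring
    have e3 : φ (Polynomial.X - Polynomial.C ((p:ℝ)*(q:ℝ) + (p:ℝ) - 2)) = c - p - p*q := by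
      rw [map_sub, hφC, hc_def]
      rw [show RatFunc.C ((p:ℝ)*(q:ℝ) + (p:ℝ) - 2)
          = ((p:ℕ) : RatFunc ℝ) * ((q:ℕ) : RatFunc ℝ) + ((p:ℕ) : RatFunc ℝ) - 2 by
        rw [map_sub, map_add, map_mul, map_natCast, map_natCast, map_ofNat]]
      ring
    rw [e1, e2, e3, Nat.sub_one_mul]
    ring
  have hroots : Mreal.charpoly.roots = Multiset.replicate (p*q - q) (-2:ℝ)
      + (Multiset.replicate (q-1) ((p:ℝ) - 2) + {(p:ℝ)*(q:ℝ) + (p:ℝ) - 2}) := by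
    rw [hchar]
    rw [Polynomial.roots_mul (by
      exact (((Polynomial.monic_X_sub_C _).pow _).mul
        (((Polynomial.monic_X_sub_C _).pow _).mul (Polynomial.monic_X_sub_C _))).ne_zero)]
    rw [Polynomial.roots_mul (by
      exact (((Polynomial.monic_X_sub_C _).pow _).mul (Polynomial.monic_X_sub_C _)).ne_zero)]
    rw [Polynomial.roots_pow, Polynomial.roots_pow, Polynomial.roots_X_sub_C,
      Polynomial.roots_X_sub_C, Polynomial.roots_X_sub_C,
      Multiset.nsmul_singleton, Multiset.nsmul_singleton]
  have h3p : (3:ℝ) ≤ (p:ℝ) := by exact_mod_cast hp3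
  have h3q : (3:ℝ) ≤ (q:ℝ) := by exact_mod_cast hq3
  simp only [distEnergy]
  rw [hdist, hroots]
  simp only [Multiset.map_add, Multiset.sum_add, Multiset.map_replicate,
    Multiset.map_singleton, Multiset.sum_replicate, Multiset.sum_singleton, smul_eq_mul,
    nsmul_eq_mul]
  rw [show |(-2:ℝ)| = 2 by norm_num]
  rw [abs_of_nonneg (by linarith : (0:ℝ) ≤ (p:ℝ) - 2)]
  rw [abs_of_nonneg (by nlinarith : (0:ℝ) ≤ (p:ℝ)*(q:ℝ) + (p:ℝ) - 2)]
  rw [Nat.cast_sub (Nat.le_mul_of_pos_left q hp.pos), Nat.cast_sub (by omega : 1 ≤ q)]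
  push_cast
  ring
end
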